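/- Consider the discrete-time LTI system x_{k+1} = A x_k + B u_k, y_k = C x_k + D u_k with A ∈ ℝ^{n×n}, B ∈ ℝ^{n×m}, C ∈ ℝ^{p×n}, D ∈ ℝ^{p×m}, where (A, B) is controllable. Let T_ini ≥ ℓ, where ℓ is the lag of the system, and let N ≥ 1, T ≥ T_ini + N. Let (u^d_i, y^d_i) for i = −T_ini+1, …, T be an input–output trajectory of the system, i.e., there exists a state sequence (x^d_i) with x^d_{i+1} = A x^d_i + B u^d_i and y^d_i = C x^d_i + D u^d_i over this index range; let ξ^d_i for i = 1, …, T be the corresponding extended states. Assume the sequence (u^d_1, …, u^d_T) is persistently exciting of order n + T_ini + N. Then, for any k ≥ 0, a pair of sequences u_{k−T_ini}, …, u_{k+N−1} ∈ ℝᵐ and y_{k−T_ini}, …, y_{k+N−1} ∈ ℝᵖ is a trajectory of the system (i.e., there exist states x_i with x_{i+1} = A x_i + B u_i and y_i = C x_i + D u_i for i = k−T_ini, …, k+N−1) if and only if there exists α ∈ ℝ^{T−N+1} such that the stacked vector col(ξ_k, u_k, …, u_{k+N−1}, y_k, …, y_{k+N−1}) equals the stacked matrix col(H₁(ξ^d_1,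 …, ξ^d_{T−N+1}), H_N(u^d_1, …, u^d_T), H_N(y^d_1, …, y^d_T)) times α, where ξ_k is the extended state built from u_{k−T_ini}, …, u_{k−1} and y_{k−T_ini}, …, y_{k−1}. -/

import Mathlib

open Matrix

/-- Hankel matrix of order `L` built from the (1-indexed) data `s 1, …, s T`
of vectors in `ℝ^ι`: block entry at block position `(i, j)` (1-indexed) is
`s (i + j - 1)`. It has `L` block rows and `T - L + 1` block columns. -/
def hankel (ι : Type*) (L T : ℕ) (s : ℤ → ι → ℝ) :
    Matrix (Fin L × ι) (Fin (T - L + 1)) ℝ :=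
  fun q j => s ((q.1 : ℕ) + (j : ℕ) + 1) q.2

/-- A (1-indexed) sequence `s 1, …, s T` of vectors in `ℝ^ι` is persistently
exciting of order `L` if its Hankel matrix of order `L` has full row rank. -/
def PersistentlyExciting (ι : Type*) [Fintype ι] [DecidableEq ι]
    (L T : ℕ) (s : ℤ → ι → ℝ) : Prop :=
  (hankel ι L T s).rank = Fintype.card (Fin L × ι)

/-- The extended state `ξ_k = col(u_{k-T_ini}, …, u_{k-1}, y_{k-T_ini}, …, y_{k-1})`
of input/output sequences `u`, `y`, as a vector in `ℝ^{(m+p)·T_ini}`. -/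
def extState (m p Tini : ℕ) (u : ℤ → Fin m → ℝ) (y : ℤ → Fin p → ℝ) (k : ℤ) :
    (Fin Tini × Fin m) ⊕ (Fin Tini × Fin p) → ℝ :=
  Sum.elim (fun q => u (k - (Tini : ℤ) + (q.1 : ℕ)) q.2)
    (fun q => y (k - (Tini : ℤ) + (q.1 : ℕ)) q.2)

/-- Controllability matrix `[B, AB, …, A^{n-1}B]`. -/
def ctrbMat (n m : ℕ) (A : Matrix (Fin n) (Fin n) ℝ) (B : Matrix (Fin n) (Fin m) ℝ) :
    Matrix (Fin n) (Fin n × Fin m) ℝ :=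
  fun i q => (A ^ (q.1 : ℕ) * B) i q.2

/-- Observability matrix `col(C, CA, …, CA^{j-1})` of order `j`. -/
def obsMat (n p : ℕ) (A : Matrix (Fin n) (Fin n) ℝ) (C : Matrix (Fin p) (Fin n) ℝ)
    (j : ℕ) : Matrix (Fin j × Fin p) (Fin n) ℝ :=
  fun q c => (C * A ^ (q.1 : ℕ)) q.2 c

section wflAux
open Finset

lemma wfl_surj_of_rank {r c : Type*} [Fintype r] [Fintype c] (M : Matrix r c ℝ)
    (h : M.rank = Fintype.card r) : Function.Surjective M.mulVec := by
  have hr : LinearMap.range M.mulVecLin = ⊤ := by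
    apply Submodule.eq_top_of_finrank_eq
    rw [← Matrix.rank, h, Module.finrank_pi]
  intro b
  have : b ∈ LinearMap.range M.mulVecLin := hr ▸ Submodule.mem_top
  obtain ⟨a, ha⟩ := this
  exact ⟨a, ha⟩

lemma wfl_inj_of_rank {r c : Type*} [Fintype r] [Fintype c] (M : Matrix r c ℝ)
    (h : M.rank = Fintype.card c) : Function.Injective M.mulVec := by
  have h1 := M.mulVecLin.finrank_range_add_finrank_ker
  rw [← Matrix.rank, h, Module.finrank_pi] at h1
  have hker : LinearMap.ker M.mulVecLin = ⊥ := by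
    apply Submodule.finrank_eq_zero.mp
    omega
  have := LinearMap.ker_eq_bot.mp hker
  simpa [Matrix.coe_mulVecLin] using this

lemma wfl_leftker_of_rank_rows {r c : Type*} [Fintype r] [Fintype c] (M : Matrix r c ℝ)
    (h : M.rank = Fintype.card r) : ∀ v : r → ℝ, v ᵥ* M = 0 → v = 0 := by
  intro v hv
  have ht : (Mᵀ).rank = Fintype.card r := by rw [Matrix.rank_transpose]; exact h
  have hinj := wfl_inj_of_rank Mᵀ ht
  apply hinj
  rw [Matrix.mulVec_transpose, hv, Matrix.mulVec_zero]

lemma wfl_surj_of_leftker {r c : Type*} [Fintype r] [Fintype c] [DecidableEq r] (M : Matrix r c ℝ)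
    (h : ∀ v : r → ℝ, v ᵥ* M = 0 → v = 0) : Function.Surjective M.mulVec := by
  apply wfl_surj_of_rank
  rw [← Matrix.rank_transpose]
  have hinj : Function.Injective (Mᵀ).mulVecLin := by
    rw [← LinearMap.ker_eq_bot]
    apply (Submodule.eq_bot_iff _).mpr
    intro v hv
    apply h
    rw [← Matrix.mulVec_transpose]
    exact hv
  have h1 := (Mᵀ).mulVecLin.finrank_range_add_finrank_ker
  rw [LinearMap.ker_eq_bot.mpr hinj] at h1
  simp only [finrank_bot, add_zero, Module.finrank_pi] at h1
  rw [Matrix.rank, h1]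

lemma wfl_leftker_of_surj {r c : Type*} [Fintype r] [Fintype c] [DecidableEq r] (M : Matrix r c ℝ)
    (hs : Function.Surjective M.mulVec) : ∀ v : r → ℝ, v ᵥ* M = 0 → v = 0 := by
  intro v hv
  funext i
  obtain ⟨a, ha⟩ := hs (Pi.single i 1)
  have : v ⬝ᵥ (M *ᵥ a) = v i := by rw [ha, dotProduct_single, mul_one]
  rw [Matrix.dotProduct_mulVec, hv, zero_dotProduct] at this
  exact this.symm

lemma wfl_mulVec_sum {a b : ℕ} {ι : Type*} (M : Matrix (Fin a) (Fin b) ℝ) (s : Finset ι)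
    (c : ι → ℝ) (f : ι → Fin b → ℝ) :
    M *ᵥ (∑ j ∈ s, c j • f j) = ∑ j ∈ s, c j • (M *ᵥ f j) := by
  rw [← Matrix.mulVecLin_apply, map_sum]
  simp [Matrix.mulVecLin_apply, Matrix.mulVec_smul]

lemma wfl_state_expand {n m : ℕ} (A : Matrix (Fin n) (Fin n) ℝ) (B : Matrix (Fin n) (Fin m) ℝ)
    (x : ℤ → Fin n → ℝ) (u : ℤ → Fin m → ℝ) (lo hi : ℤ)
    (hrec : ∀ i : ℤ, lo ≤ i → i ≤ hi → x (i + 1) = A *ᵥ x i + B *ᵥ u i)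
    (σ : ℤ) (hσ : lo ≤ σ) :
    ∀ s : ℕ, σ + s ≤ hi + 1 →
      x (σ + s) = (A ^ s) *ᵥ x σ + ∑ r ∈ Finset.range s, (A ^ (s - 1 - r) * B) *ᵥ u (σ + r) := by
  intro s
  induction s with
  | zero => intro _; simp
  | succ s ih =>
    intro hs
    have hs' : σ + (s : ℤ) ≤ hi + 1 := by push_cast at hs ⊢; omega
    have hle : σ + (s : ℤ) ≤ hi := by push_cast at hs; omega
    have h1 : σ + ((s : ℕ) + 1 : ℕ) = (σ + s) + 1 := by push_cast; ring
    rw [h1, hrec (σ + s) (by omega) hle, ih hs']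
    rw [Matrix.mulVec_add, Matrix.mulVec_mulVec, ← pow_succ']
    have h2 : A *ᵥ (∑ r ∈ Finset.range s, (A ^ (s - 1 - r) * B) *ᵥ u (σ + r))
        = ∑ r ∈ Finset.range s, (A ^ (s - r) * B) *ᵥ u (σ + r) := by
      rw [← Matrix.mulVecLin_apply, map_sum]
      refine Finset.sum_congr rfl fun r hr => ?_
      rw [Finset.mem_range] at hr
      have he : s - 1 - r + 1 = s - r := by omega
      rw [Matrix.mulVecLin_apply, Matrix.mulVec_mulVec, ← Matrix.mul_assoc, ← pow_succ', he]
    rw [h2, Finset.sum_range_succ]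
    have h3 : ∀ r ∈ Finset.range s, (A ^ (s + 1 - 1 - r) * B) *ᵥ u (σ + r)
        = (A ^ (s - r) * B) *ᵥ u (σ + r) := by
      intro r hr
      have he : s + 1 - 1 - r = s - r := by omega
      rw [he]
    rw [Finset.sum_congr rfl h3]
    simp [add_assoc, add_comm, add_left_comm]

lemma wfl_charpoly_sum {n : ℕ} (A : Matrix (Fin n) (Fin n) ℝ) :
    ∑ s ∈ Finset.range (n + 1), A.charpoly.coeff s • A ^ s = 0 := by
  have h1 := Matrix.aeval_self_charpoly A
  have h2 : A.charpoly.natDegree < n + 1 := by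
    rw [Matrix.charpoly_natDegree_eq_dim]
    simp
  rw [Polynomial.aeval_eq_sum_range' h2] at h1
  exact h1

lemma wfl_charpoly_top {n : ℕ} (A : Matrix (Fin n) (Fin n) ℝ) :
    A.charpoly.coeff n = 1 := by
  have := (Matrix.charpoly_monic A).coeff_natDegree
  rwa [Matrix.charpoly_natDegree_eq_dim, Fintype.card_fin] at this

/-- Coefficients of the composite functional used in the proof of the fundamental lemma. -/
noncomputable def wflW {n m : ℕ} (A : Matrix (Fin n) (Fin n) ℝ) (B : Matrix (Fin n) (Fin m) ℝ)
    (ζ : Fin n → ℝ) (ηf : ℕ → Fin m → ℝ) : ℕ → Fin m → ℝ :=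
  fun i a => ∑ s ∈ Finset.range (n + 1), A.charpoly.coeff s *
    (if i < s then (ζ ᵥ* (A ^ (s - 1 - i) * B)) a else ηf (i - s) a)

lemma wflW_eta {n m : ℕ} (A : Matrix (Fin n) (Fin n) ℝ) (B : Matrix (Fin n) (Fin m) ℝ)
    (ζ : Fin n → ℝ) (ηf : ℕ → Fin m → ℝ) (i : ℕ) (hi : n ≤ i) (a : Fin m) :
    wflW A B ζ ηf i a = ∑ s ∈ Finset.range (n + 1), A.charpoly.coeff s * ηf (i - s) a := by
  unfold wflW
  refine Finset.sum_congr rfl fun s hs => ?_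
  rw [Finset.mem_range] at hs
  rw [if_neg (by omega)]

lemma wfl_eta_zero {n m L : ℕ} (A : Matrix (Fin n) (Fin n) ℝ) (B : Matrix (Fin n) (Fin m) ℝ)
    (ζ : Fin n → ℝ) (ηf : ℕ → Fin m → ℝ) (hηL : ∀ t, L ≤ t → ηf t = 0)
    (hw : ∀ i, i < n + L → ∀ a, wflW A B ζ ηf i a = 0) :
    ∀ t, ηf t = 0 := by
  suffices h : ∀ d t, L ≤ t + d → ηf t = 0 by
    intro t; exact h L t (by omega)
  intro d
  induction d with
  | zero => intro t ht; exact hηL t (by omega)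
  | succ d ih =>
    intro t ht
    by_cases h1 : L ≤ t + d
    · exact ih t h1
    · have htL : t < L := by omega
      funext a
      have hw1 := hw (n + t) (by omega) a
      rw [wflW_eta A B ζ ηf (n + t) (by omega) a, Finset.sum_range_succ] at hw1
      have h2 : ∀ s ∈ Finset.range n, A.charpoly.coeff s * ηf (n + t - s) a = 0 := by
        intro s hs
        rw [Finset.mem_range] at hs
        rw [ih (n + t - s) (by omega)]
        simp
      rw [Finset.sum_eq_zero h2, wfl_charpoly_top, zero_add] at hw1
      have h3 : n + t - n = t := by omega
      rw [h3, one_mul] at hw1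
      simpa using hw1

lemma wfl_zeta_zero {n m L : ℕ} (A : Matrix (Fin n) (Fin n) ℝ) (B : Matrix (Fin n) (Fin m) ℝ)
    (ζ : Fin n → ℝ)
    (hw : ∀ i, i < n + L → ∀ a, wflW A B ζ (fun _ => 0) i a = 0) :
    ∀ jj, jj < n → ζ ᵥ* (A ^ jj * B) = 0 := by
  intro jj
  induction jj using Nat.strong_induction_on with
  | _ jj IH =>
    intro hjj
    funext a
    have hw1 := hw (n - 1 - jj) (by omega) a
    unfold wflW at hw1
    rw [Finset.sum_eq_single_of_mem n (Finset.self_mem_range_succ n)] at hw1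
    · rw [if_pos (by omega), wfl_charpoly_top, one_mul] at hw1
      have h4 : n - 1 - (n - 1 - jj) = jj := by omega
      rw [h4] at hw1
      simpa using hw1
    · intro s hs hsne
      rw [Finset.mem_range] at hs
      by_cases hlt : n - 1 - jj < s
      · rw [if_pos hlt]
        have he : s - 1 - (n - 1 - jj) < jj := by omega
        rw [IH _ he (by omega)]
        simp
      · rw [if_neg hlt]
        simp

lemma wfl_dot_sum {n : ℕ} {ι : Type*} (ζ : Fin n → ℝ) (s : Finset ι) (f : ι → Fin n → ℝ) :
    ζ ⬝ᵥ (∑ j ∈ s, f j) = ∑ j ∈ s, ζ ⬝ᵥ f j := by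
  simp only [dotProduct, Finset.sum_apply, Finset.mul_sum]
  exact Finset.sum_comm

lemma wfl_sum_mulVec {n k : ℕ} {ι : Type*} (s : Finset ι) (M : ι → Matrix (Fin n) (Fin k) ℝ)
    (w : Fin k → ℝ) : (∑ j ∈ s, M j) *ᵥ w = ∑ j ∈ s, (M j) *ᵥ w := by
  funext i
  simp only [Matrix.mulVec, dotProduct, Matrix.sum_apply, Finset.sum_mul]
  rw [Finset.sum_comm]
  simp [Matrix.mulVec, dotProduct]

lemma wfl_column {n m Tini N T : ℕ}
    (A : Matrix (Fin n) (Fin n) ℝ) (B : Matrix (Fin n) (Fin m) ℝ)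
    (ζ : Fin n → ℝ) (ud : ℤ → Fin m → ℝ) (xd : ℤ → Fin n → ℝ)
    (hxd : ∀ i : ℤ, 1 - (Tini : ℤ) ≤ i → i ≤ (T : ℤ) → xd (i + 1) = A *ᵥ xd i + B *ᵥ ud i)
    (ηf : ℕ → Fin m → ℝ) (hηL : ∀ t, Tini + N ≤ t → ηf t = 0)
    (h0 : ∀ c : ℕ, c ≤ T - N →
      (ζ ⬝ᵥ xd ((c : ℤ) + 1 - Tini)) +
        ∑ t ∈ Finset.range (Tini + N), ∑ a, ηf t a * ud ((c : ℤ) + 1 - Tini + t) a = 0)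
    (hTnL : n + Tini + N ≤ T)
    (c : ℕ) (hc : c ≤ T - (n + Tini + N)) :
    ∑ i ∈ Finset.range (n + Tini + N), ∑ a, wflW A B ζ ηf i a * ud ((c : ℤ) + 1 + i) a = 0 := by
  have step1 : ∀ s : ℕ, s ≤ n →
      (∑ r ∈ Finset.range s, ζ ⬝ᵥ ((A ^ (s - 1 - r) * B) *ᵥ ud ((c : ℤ) + 1 + r)))
        + ∑ t ∈ Finset.range (Tini + N), ∑ a, ηf t a * ud ((c : ℤ) + 1 + s + t) a
      = - (ζ ⬝ᵥ ((A ^ s) *ᵥ xd ((c : ℤ) + 1))) := by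
    intro s hs
    have hexp := wfl_state_expand A B xd ud (1 - (Tini : ℤ)) T hxd ((c : ℤ) + 1)
      (by omega) s (by omega)
    have h00 := h0 (c + Tini + s) (by omega)
    have hidx : ((c + Tini + s : ℕ) : ℤ) + 1 - Tini = (c : ℤ) + 1 + s := by push_cast; ring
    rw [hidx, hexp, dotProduct_add, wfl_dot_sum] at h00
    linarith
  have step2 : ∀ s ∈ Finset.range (n + 1),
      (∑ i ∈ Finset.range (n + Tini + N), ∑ a,
        (A.charpoly.coeff s *
          (if i < s then (ζ ᵥ* (A ^ (s - 1 - i) * B)) a else ηf (i - s) a)) *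
            ud ((c : ℤ) + 1 + i) a)
      = A.charpoly.coeff s *
          ((∑ r ∈ Finset.range s, ζ ⬝ᵥ ((A ^ (s - 1 - r) * B) *ᵥ ud ((c : ℤ) + 1 + r)))
            + ∑ t ∈ Finset.range (Tini + N), ∑ a, ηf t a * ud ((c : ℤ) + 1 + s + t) a) := by
    intro s hs
    rw [Finset.mem_range] at hs
    have e1 : ∀ i : ℕ,
        (∑ a, (A.charpoly.coeff s *
          (if i < s then (ζ ᵥ* (A ^ (s - 1 - i) * B)) a else ηf (i - s) a)) *
            ud ((c : ℤ) + 1 + i) a)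
        = A.charpoly.coeff s *
            (if i < s then ζ ⬝ᵥ ((A ^ (s - 1 - i) * B) *ᵥ ud ((c : ℤ) + 1 + i))
             else ∑ a, ηf (i - s) a * ud ((c : ℤ) + 1 + i) a) := by
      intro i
      by_cases hi : i < s
      · simp only [if_pos hi, mul_assoc, ← Finset.mul_sum]
        congr 1
        rw [Matrix.dotProduct_mulVec]
        rfl
      · simp only [if_neg hi, mul_assoc, ← Finset.mul_sum]
    rw [Finset.sum_congr rfl fun i _ => e1 i, ← Finset.mul_sum]
    congr 1
    rw [← Finset.sum_range_add_sum_Ico _ (show s ≤ n + Tini + N by omega)]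
    congr 1
    · exact Finset.sum_congr rfl fun i hi => if_pos (Finset.mem_range.mp hi)
    · rw [Finset.sum_Ico_eq_sum_range]
      have e2 : ∀ i ∈ Finset.range (n + Tini + N - s),
          (if s + i < s then ζ ⬝ᵥ ((A ^ (s - 1 - (s + i)) * B) *ᵥ ud ((c : ℤ) + 1 + ((s + i : ℕ) : ℤ)))
           else ∑ a, ηf (s + i - s) a * ud ((c : ℤ) + 1 + ((s + i : ℕ) : ℤ)) a)
          = ∑ a, ηf i a * ud ((c : ℤ) + 1 + s + i) a := by
        intro i _
        rw [if_neg (by omega)]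
        have h1 : s + i - s = i := by omega
        have h2 : ((c : ℤ) + 1 + ((s : ℕ) + (i : ℕ) : ℕ)) = (c : ℤ) + 1 + s + i := by
          push_cast; ring
        rw [h1, h2]
      rw [Finset.sum_congr rfl e2]
      refine (Finset.sum_subset (Finset.range_subset_range.mpr (show Tini + N ≤ n + Tini + N - s by omega)) ?_).symm
      intro t ht hnt
      rw [Finset.mem_range] at hnt
      rw [hηL t (by omega)]
      simp
  have hunfold : ∑ i ∈ Finset.range (n + Tini + N), ∑ a,
      wflW A B ζ ηf i a * ud ((c : ℤ) + 1 + i) a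
      = ∑ s ∈ Finset.range (n + 1), ∑ i ∈ Finset.range (n + Tini + N), ∑ a,
        (A.charpoly.coeff s *
          (if i < s then (ζ ᵥ* (A ^ (s - 1 - i) * B)) a else ηf (i - s) a)) *
            ud ((c : ℤ) + 1 + i) a := by
    have h1 : ∀ i : ℕ, ∀ a : Fin m, wflW A B ζ ηf i a * ud ((c : ℤ) + 1 + i) a
        = ∑ s ∈ Finset.range (n + 1),
            (A.charpoly.coeff s *
              (if i < s then (ζ ᵥ* (A ^ (s - 1 - i) * B)) a else ηf (i - s) a)) *
                ud ((c : ℤ) + 1 + i) a := by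
      intro i a
      unfold wflW
      rw [Finset.sum_mul]
    have hA : ∑ i ∈ Finset.range (n + Tini + N), ∑ a,
        wflW A B ζ ηf i a * ud ((c : ℤ) + 1 + i) a
        = ∑ i ∈ Finset.range (n + Tini + N), ∑ a, ∑ s ∈ Finset.range (n + 1),
            (A.charpoly.coeff s *
              (if i < s then (ζ ᵥ* (A ^ (s - 1 - i) * B)) a else ηf (i - s) a)) *
                ud ((c : ℤ) + 1 + i) a :=
      Finset.sum_congr rfl fun i _ => Finset.sum_congr rfl fun a _ => h1 i a
    have hB : ∑ i ∈ Finset.range (n + Tini + N), ∑ a, ∑ s ∈ Finset.range (n + 1),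
            (A.charpoly.coeff s *
              (if i < s then (ζ ᵥ* (A ^ (s - 1 - i) * B)) a else ηf (i - s) a)) *
                ud ((c : ℤ) + 1 + i) a
        = ∑ i ∈ Finset.range (n + Tini + N), ∑ s ∈ Finset.range (n + 1), ∑ a,
            (A.charpoly.coeff s *
              (if i < s then (ζ ᵥ* (A ^ (s - 1 - i) * B)) a else ηf (i - s) a)) *
                ud ((c : ℤ) + 1 + i) a :=
      Finset.sum_congr rfl fun i _ => Finset.sum_comm
    exact hA.trans (hB.trans Finset.sum_comm)
  rw [hunfold, Finset.sum_congr rfl step2]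
  have e3 : ∀ s ∈ Finset.range (n + 1),
      A.charpoly.coeff s *
        ((∑ r ∈ Finset.range s, ζ ⬝ᵥ ((A ^ (s - 1 - r) * B) *ᵥ ud ((c : ℤ) + 1 + r)))
          + ∑ t ∈ Finset.range (Tini + N), ∑ a, ηf t a * ud ((c : ℤ) + 1 + s + t) a)
      = - (ζ ⬝ᵥ ((A.charpoly.coeff s • A ^ s) *ᵥ xd ((c : ℤ) + 1))) := by
    intro s hs
    rw [Finset.mem_range] at hs
    rw [step1 s (by omega), Matrix.smul_mulVec, dotProduct_smul, smul_eq_mul]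
    ring
  rw [Finset.sum_congr rfl e3, Finset.sum_neg_distrib, ← wfl_dot_sum, ← wfl_sum_mulVec,
    wfl_charpoly_sum, Matrix.zero_mulVec, dotProduct_zero, neg_zero]

/-- The definitions `hankel`, `PersistentlyExciting`, `extState`, `ctrbMat`, `obsMat`
from the problem statement are assumed to be declared above. -/
def wflEtaF {n L m : ℕ} (v : (Fin n ⊕ (Fin L × Fin m)) → ℝ) : ℕ → Fin m → ℝ :=
  fun t => if h : t < L then (fun a => v (Sum.inr (⟨t, h⟩, a))) else 0

lemma wflEtaF_eq {n L m : ℕ} (v : (Fin n ⊕ (Fin L × Fin m)) → ℝ) (t : Fin L) (a : Fin m) :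
    v (Sum.inr (t, a)) = wflEtaF v (t : ℕ) a := by
  unfold wflEtaF
  rw [dif_pos t.isLt, Fin.eta]

lemma wflEtaF_zero {n L m : ℕ} (v : (Fin n ⊕ (Fin L × Fin m)) → ℝ) (t : ℕ) (h : L ≤ t) :
    wflEtaF v t = 0 := by
  unfold wflEtaF
  rw [dif_neg (by omega)]

lemma wfl_key {n m Tini N T : ℕ}
    (A : Matrix (Fin n) (Fin n) ℝ) (B : Matrix (Fin n) (Fin m) ℝ)
    (hctrb : (ctrbMat n m A B).rank = n)
    (hN : 1 ≤ N) (hT : Tini + N ≤ T)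
    (ud : ℤ → Fin m → ℝ) (xd : ℤ → Fin n → ℝ)
    (hxd : ∀ i : ℤ, 1 - (Tini : ℤ) ≤ i → i ≤ (T : ℤ) → xd (i + 1) = A *ᵥ xd i + B *ᵥ ud i)
    (hPE : PersistentlyExciting (Fin m) (n + Tini + N) T ud)
    (v : Fin n ⊕ (Fin (Tini + N) × Fin m) → ℝ)
    (hv : ∀ j : Fin (T - N + 1),
      (∑ cc, v (Sum.inl cc) * xd ((j : ℕ) + 1 - (Tini : ℤ)) cc) +
        ∑ q : Fin (Tini + N) × Fin m,
          v (Sum.inr q) * ud ((j : ℕ) + 1 - (Tini : ℤ) + (q.1 : ℕ)) q.2 = 0) :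
    v = 0 := by
  by_cases hm : m = 0
  · have h1 := Matrix.rank_le_card_width (ctrbMat n m A B)
    rw [hctrb] at h1
    subst hm
    have h2 : n = 0 := by simpa using h1
    funext r
    rcases r with cc | q
    · exact absurd cc.isLt (by omega)
    · exact q.2.elim0
  · have hPE2 : (hankel (Fin m) (n + Tini + N) T ud).rank
        = Fintype.card (Fin (n + Tini + N) × Fin m) := hPE
    have hcard := Matrix.rank_le_card_width (hankel (Fin m) (n + Tini + N) T ud)
    rw [hPE2] at hcard
    simp only [Fintype.card_prod, Fintype.card_fin] at hcard
    have hmul : n + Tini + N ≤ (n + Tini + N) * m :=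
      Nat.le_mul_of_pos_right _ (by omega)
    have hTnL : n + Tini + N ≤ T := by
      have h3 := le_trans hmul hcard
      omega
    have hlk := wfl_leftker_of_surj _ (wfl_surj_of_rank _ hPE2)
    set ζ : Fin n → ℝ := fun cc => v (Sum.inl cc) with hζdef
    have h0 : ∀ c : ℕ, c ≤ T - N →
        (ζ ⬝ᵥ xd ((c : ℤ) + 1 - Tini)) +
          ∑ t ∈ Finset.range (Tini + N), ∑ a, wflEtaF v t a * ud ((c : ℤ) + 1 - Tini + t) a
          = 0 := by
      intro c hcc
      have h4 := hv ⟨c, by omega⟩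
      rw [Fintype.sum_prod_type] at h4
      rw [← Fin.sum_univ_eq_sum_range]
      simp only [← wflEtaF_eq]
      exact h4
    have hcol : ∀ c : ℕ, c ≤ T - (n + Tini + N) →
        ∑ i ∈ Finset.range (n + Tini + N), ∑ a,
          wflW A B ζ (wflEtaF v) i a * ud ((c : ℤ) + 1 + i) a = 0 :=
      fun c hcc => wfl_column A B ζ ud xd hxd (wflEtaF v) (wflEtaF_zero v) h0 hTnL c hcc
    have hW0 : (fun q : Fin (n + Tini + N) × Fin m => wflW A B ζ (wflEtaF v) q.1 q.2)
        ᵥ* hankel (Fin m) (n + Tini + N) T ud = 0 := by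
      funext j
      show ∑ q : Fin (n + Tini + N) × Fin m,
        wflW A B ζ (wflEtaF v) q.1 q.2 * ud (((q.1 : ℕ) : ℤ) + ((j : ℕ) : ℤ) + 1) q.2 = 0
      rw [Fintype.sum_prod_type]
      have hidx : ∀ i : Fin (n + Tini + N),
          ∀ a, wflW A B ζ (wflEtaF v) i a * ud (((i : ℕ) : ℤ) + ((j : ℕ) : ℤ) + 1) a
            = wflW A B ζ (wflEtaF v) i a * ud ((((j : ℕ) : ℤ)) + 1 + ((i : ℕ) : ℤ)) a := by
        intro i a
        congr 1
        congr 1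
        ring
      simp only [hidx]
      have h6 := hcol (j : ℕ) (by omega)
      rw [← Fin.sum_univ_eq_sum_range] at h6
      exact h6
    have hWz := hlk _ hW0
    have hwzero : ∀ i : ℕ, i < n + Tini + N → ∀ a, wflW A B ζ (wflEtaF v) i a = 0 := by
      intro i hi a
      exact congrFun hWz (⟨i, hi⟩, a)
    have hη := wfl_eta_zero (L := Tini + N) A B ζ (wflEtaF v) (wflEtaF_zero v)
      (fun i hi a => hwzero i (by omega) a)
    have hWfun : wflW A B ζ (wflEtaF v) = wflW A B ζ (fun _ => 0) := by
      rw [show (wflEtaF v) = (fun _ : ℕ => (0 : Fin m → ℝ)) from funext hη]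
    have hζAB := wfl_zeta_zero (L := Tini + N) A B ζ
      (fun i hi a => by rw [← hWfun]; exact hwzero i (by omega) a)
    have hζM : ζ ᵥ* (ctrbMat n m A B) = 0 := by
      funext q
      have h5 := congrFun (hζAB q.1 q.1.isLt) q.2
      show ζ ⬝ᵥ (fun i => ctrbMat n m A B i q) = 0
      simpa [ctrbMat, Matrix.vecMul, dotProduct] using h5
    have hζ0 : ζ = 0 := wfl_leftker_of_rank_rows _ (by simpa using hctrb) ζ hζM
    funext r
    rcases r with cc | q
    · exact congrFun hζ0 cc
    · rcases q with ⟨t, a⟩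
      have h7 := congrFun (hη (t : ℕ)) a
      rw [← wflEtaF_eq] at h7
      simpa using h7

end wflAux

/-- Lemma 1 of the paper: Willems' fundamental lemma, extended-state
version. For a controllable LTI system `x⁺ = Ax + Bu, y = Cx + Du`, `T_ini ≥ ℓ`
(the lag), `N ≥ 1`, `T ≥ T_ini + N`, and data `(u^d, y^d)` generated by the system
whose input sequence is persistently exciting of order `n + T_ini + N`: a pair of
sequences `(u_i, y_i)`, `i = k - T_ini, …, k + N - 1`, is a trajectory of the system
iff the stacked vector `col(ξ_k, u_{k..k+N-1}, y_{k..k+N-1})` lies in the range of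
the stacked Hankel matrix `col(H₁(ξ^d), H_N(u^d), H_N(y^d))`. -/
theorem willems_fundamental_lemma
    (n m p Tini N T : ℕ)
    (A : Matrix (Fin n) (Fin n) ℝ) (B : Matrix (Fin n) (Fin m) ℝ)
    (C : Matrix (Fin p) (Fin n) ℝ) (D : Matrix (Fin p) (Fin m) ℝ)
    (hctrb : (ctrbMat n m A B).rank = n)
    (hobs : ∃ j ≤ n, (obsMat n p A C j).rank = n)
    (hlag : sInf {j : ℕ | (obsMat n p A C j).rank = n} ≤ Tini)
    (hN : 1 ≤ N) (hT : Tini + N ≤ T)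
    (ud : ℤ → Fin m → ℝ) (yd : ℤ → Fin p → ℝ)
    (hdata : ∃ xd : ℤ → Fin n → ℝ, ∀ i : ℤ, 1 - (Tini : ℤ) ≤ i → i ≤ (T : ℤ) →
      xd (i + 1) = A.mulVec (xd i) + B.mulVec (ud i) ∧
      yd i = C.mulVec (xd i) + D.mulVec (ud i))
    (hPE : PersistentlyExciting (Fin m) (n + Tini + N) T ud) :
    ∀ k : ℕ, ∀ (u : ℤ → Fin m → ℝ) (y : ℤ → Fin p → ℝ),
      (∃ x : ℤ → Fin n → ℝ, ∀ i : ℤ, (k : ℤ) - (Tini : ℤ) ≤ i → i ≤ (k : ℤ) + (N : ℤ) - 1 →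
        x (i + 1) = A.mulVec (x i) + B.mulVec (u i) ∧
        y i = C.mulVec (x i) + D.mulVec (u i))
      ↔
      (∃ α : Fin (T - N + 1) → ℝ,
        (Sum.elim (extState m p Tini u y (k : ℤ))
          (Sum.elim (fun q : Fin N × Fin m => u ((k : ℤ) + (q.1 : ℕ)) q.2)
                    (fun q : Fin N × Fin p => y ((k : ℤ) + (q.1 : ℕ)) q.2)))
        =
        Matrix.mulVec
          (fun rj =>
            Sum.elim
              (fun ξidx => fun j : Fin (T - N + 1) =>
                extState m p Tini ud yd ((j : ℕ) + 1) ξidx)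
              (Sum.elim
                (fun q : Fin N × Fin m => fun j : Fin (T - N + 1) =>
                  ud ((q.1 : ℕ) + (j : ℕ) + 1) q.2)
                (fun q : Fin N × Fin p => fun j : Fin (T - N + 1) =>
                  yd ((q.1 : ℕ) + (j : ℕ) + 1) q.2))
              rj)
          α) := by
  intro k u y
  obtain ⟨xd, hxd⟩ := hdata
  have hjb : ∀ j : Fin (T - N + 1), ((j : ℕ) : ℤ) ≤ (T : ℤ) - (N : ℤ) := by
    intro j
    have h1 := j.isLt
    omega
  -- the linear combination of data trajectories is a trajectory
  have hcomb : ∀ (α : Fin (T - N + 1) → ℝ) (i : ℤ), (k : ℤ) - Tini ≤ i → i ≤ (k : ℤ) + N - 1 →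
      ((∑ j, α j • xd ((i + 1) - k + (j : ℕ) + 1)) =
        A *ᵥ (∑ j, α j • xd (i - k + (j : ℕ) + 1)) +
          B *ᵥ (∑ j, α j • ud (i - k + (j : ℕ) + 1)))
      ∧ ((∑ j, α j • yd (i - k + (j : ℕ) + 1)) =
        C *ᵥ (∑ j, α j • xd (i - k + (j : ℕ) + 1)) +
          D *ᵥ (∑ j, α j • ud (i - k + (j : ℕ) + 1))) := by
    intro α i h1 h2
    have hdat : ∀ j : Fin (T - N + 1),
        (xd ((i - k + (j : ℕ) + 1) + 1) =
          A *ᵥ xd (i - k + (j : ℕ) + 1) + B *ᵥ ud (i - k + (j : ℕ) + 1))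
        ∧ (yd (i - k + (j : ℕ) + 1) =
          C *ᵥ xd (i - k + (j : ℕ) + 1) + D *ᵥ ud (i - k + (j : ℕ) + 1)) := by
      intro j
      exact hxd _ (by have := hjb j; omega) (by have := hjb j; omega)
    constructor
    · rw [wfl_mulVec_sum, wfl_mulVec_sum, ← Finset.sum_add_distrib]
      refine Finset.sum_congr rfl fun j _ => ?_
      have e1 : (i + 1) - k + (j : ℕ) + 1 = (i - k + (j : ℕ) + 1) + 1 := by ring
      rw [e1, (hdat j).1, smul_add]
    · rw [wfl_mulVec_sum, wfl_mulVec_sum, ← Finset.sum_add_distrib]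
      refine Finset.sum_congr rfl fun j _ => ?_
      rw [(hdat j).2, smul_add]
  -- component computations for the stacked Hankel matrix
  have hRu_past : ∀ (α : Fin (T - N + 1) → ℝ) (t : Fin Tini) (a : Fin m),
      (∑ j : Fin (T - N + 1),
          extState m p Tini ud yd (((j : ℕ) : ℤ) + 1) (Sum.inl (t, a)) * α j)
      = (∑ j, α j • ud ((((k : ℤ) - Tini + (t : ℕ))) - k + (j : ℕ) + 1)) a := by
    intro α t a
    rw [Finset.sum_apply]
    refine Finset.sum_congr rfl fun j _ => ?_
    simp only [extState, Sum.elim_inl, Pi.smul_apply, smul_eq_mul]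
    have hidx : ((j : ℕ) : ℤ) + 1 - Tini + (t : ℕ) =
        ((k : ℤ) - Tini + (t : ℕ)) - k + (j : ℕ) + 1 := by ring
    rw [hidx, mul_comm]
  have hRy_past : ∀ (α : Fin (T - N + 1) → ℝ) (t : Fin Tini) (a : Fin p),
      (∑ j : Fin (T - N + 1),
          extState m p Tini ud yd (((j : ℕ) : ℤ) + 1) (Sum.inr (t, a)) * α j)
      = (∑ j, α j • yd ((((k : ℤ) - Tini + (t : ℕ))) - k + (j : ℕ) + 1)) a := by
    intro α t a
    rw [Finset.sum_apply]
    refine Finset.sum_congr rfl fun j _ => ?_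
    simp only [extState, Sum.elim_inr, Pi.smul_apply, smul_eq_mul]
    have hidx : ((j : ℕ) : ℤ) + 1 - Tini + (t : ℕ) =
        ((k : ℤ) - Tini + (t : ℕ)) - k + (j : ℕ) + 1 := by ring
    rw [hidx, mul_comm]
  have hRu_fut : ∀ (α : Fin (T - N + 1) → ℝ) (t : Fin N) (a : Fin m),
      (∑ j : Fin (T - N + 1), ud (((t : ℕ) : ℤ) + ((j : ℕ) : ℤ) + 1) a * α j)
      = (∑ j, α j • ud ((((k : ℤ) + (t : ℕ))) - k + (j : ℕ) + 1)) a := by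
    intro α t a
    rw [Finset.sum_apply]
    refine Finset.sum_congr rfl fun j _ => ?_
    simp only [Pi.smul_apply, smul_eq_mul]
    have hidx : ((t : ℕ) : ℤ) + ((j : ℕ) : ℤ) + 1 =
        ((k : ℤ) + (t : ℕ)) - k + (j : ℕ) + 1 := by ring
    rw [hidx, mul_comm]
  have hRy_fut : ∀ (α : Fin (T - N + 1) → ℝ) (t : Fin N) (a : Fin p),
      (∑ j : Fin (T - N + 1), yd (((t : ℕ) : ℤ) + ((j : ℕ) : ℤ) + 1) a * α j)
      = (∑ j, α j • yd ((((k : ℤ) + (t : ℕ))) - k + (j : ℕ) + 1)) a := by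
    intro α t a
    rw [Finset.sum_apply]
    refine Finset.sum_congr rfl fun j _ => ?_
    simp only [Pi.smul_apply, smul_eq_mul]
    have hidx : ((t : ℕ) : ℤ) + ((j : ℕ) : ℤ) + 1 =
        ((k : ℤ) + (t : ℕ)) - k + (j : ℕ) + 1 := by ring
    rw [hidx, mul_comm]
  constructor
  · -- hard direction
    rintro ⟨x, hx⟩
    set G : Matrix (Fin n ⊕ (Fin (Tini + N) × Fin m)) (Fin (T - N + 1)) ℝ :=
      fun r j => Sum.elim (fun cc => xd (((j : ℕ) : ℤ) + 1 - Tini) cc)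
        (fun q : Fin (Tini + N) × Fin m =>
          ud (((j : ℕ) : ℤ) + 1 - Tini + (q.1 : ℕ)) q.2) r with hGdef
    have hsurj : Function.Surjective G.mulVec := by
      apply wfl_surj_of_leftker
      intro v hv
      apply wfl_key A B hctrb hN hT ud xd (fun i hi1 hi2 => (hxd i hi1 hi2).1) hPE v
      intro j
      have h8 := congrFun hv j
      have h9 : (v ᵥ* G) j = (∑ cc, v (Sum.inl cc) * xd (((j : ℕ) : ℤ) + 1 - Tini) cc) +
          ∑ q : Fin (Tini + N) × Fin m,
            v (Sum.inr q) * ud (((j : ℕ) : ℤ) + 1 - Tini + (q.1 : ℕ)) q.2 := by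
        show ∑ r, v r * G r j = _
        rw [Fintype.sum_sum_type]
        rfl
      rw [← h9]
      exact h8
    obtain ⟨α, hα⟩ := hsurj (Sum.elim (fun cc => x ((k : ℤ) - Tini) cc)
      (fun q : Fin (Tini + N) × Fin m => u ((k : ℤ) - Tini + (q.1 : ℕ)) q.2))
    have hu : ∀ i : ℤ, (k : ℤ) - Tini ≤ i → i ≤ (k : ℤ) + N - 1 →
        (∑ j, α j • ud (i - k + (j : ℕ) + 1)) = u i := by
      intro i h1 h2
      have ht : ∃ t : Fin (Tini + N), i = (k : ℤ) - Tini + (t : ℕ) := by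
        refine ⟨⟨(i - ((k : ℤ) - Tini)).toNat, by omega⟩, ?_⟩
        show i = (k : ℤ) - (Tini : ℤ) + (((i - ((k : ℤ) - (Tini : ℤ))).toNat : ℕ) : ℤ)
        omega
      obtain ⟨t, rfl⟩ := ht
      funext a
      have h8 := congrFun hα (Sum.inr (t, a))
      have h9 : G.mulVec α (Sum.inr (t, a)) =
          (∑ j, α j • ud (((k : ℤ) - Tini + (t : ℕ)) - k + (j : ℕ) + 1)) a := by
        show ∑ j, G (Sum.inr (t, a)) j * α j = _
        rw [Finset.sum_apply]
        refine Finset.sum_congr rfl fun j _ => ?_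
        simp only [hGdef, Sum.elim_inr, Pi.smul_apply, smul_eq_mul]
        have hidx : ((j : ℕ) : ℤ) + 1 - Tini + (t : ℕ) =
            ((k : ℤ) - Tini + (t : ℕ)) - k + (j : ℕ) + 1 := by ring
        rw [hidx, mul_comm]
      exact h9.symm.trans h8
    have hx0 : (∑ j, α j • xd (((k : ℤ) - Tini) - k + (j : ℕ) + 1)) = x ((k : ℤ) - Tini) := by
      funext cc
      have h8 := congrFun hα (Sum.inl cc)
      have h9 : G.mulVec α (Sum.inl cc) =
          (∑ j, α j • xd (((k : ℤ) - Tini) - k + (j : ℕ) + 1)) cc := by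
        show ∑ j, G (Sum.inl cc) j * α j = _
        rw [Finset.sum_apply]
        refine Finset.sum_congr rfl fun j _ => ?_
        simp only [hGdef, Sum.elim_inl, Pi.smul_apply, smul_eq_mul]
        have hidx : ((j : ℕ) : ℤ) + 1 - Tini =
            ((k : ℤ) - Tini) - k + (j : ℕ) + 1 := by ring
        rw [hidx, mul_comm]
      exact h9.symm.trans h8
    have hxeq : ∀ t : ℕ, t ≤ Tini + N →
        (∑ j, α j • xd (((k : ℤ) - Tini + t) - k + (j : ℕ) + 1)) = x ((k : ℤ) - Tini + t) := by
      intro t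
      induction t with
      | zero => intro _; simpa using hx0
      | succ t ih =>
        intro hst
        have h1 : (k : ℤ) - Tini ≤ (k : ℤ) - Tini + t := by omega
        have h2 : (k : ℤ) - Tini + t ≤ (k : ℤ) + N - 1 := by omega
        have hc := (hcomb α ((k : ℤ) - Tini + t) h1 h2).1
        have hx' := (hx ((k : ℤ) - Tini + t) h1 h2).1
        have hidx : (k : ℤ) - Tini + ((t + 1 : ℕ) : ℤ) = ((k : ℤ) - Tini + t) + 1 := by
          push_cast; ring
        rw [hidx, hc, hx', ih (by omega), hu ((k : ℤ) - Tini + t) h1 h2]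
    have hyeq : ∀ i : ℤ, (k : ℤ) - Tini ≤ i → i ≤ (k : ℤ) + N - 1 →
        (∑ j, α j • yd (i - k + (j : ℕ) + 1)) = y i := by
      intro i h1 h2
      have hc := (hcomb α i h1 h2).2
      have hy' := (hx i h1 h2).2
      have ht : ∃ t : ℕ, t ≤ Tini + N ∧ i = (k : ℤ) - Tini + t :=
        ⟨(i - ((k : ℤ) - Tini)).toNat, by omega, by omega⟩
      obtain ⟨t, htle, rfl⟩ := ht
      rw [hc, hxeq t htle, hu _ h1 h2]
      exact hy'.symm
    refine ⟨α, ?_⟩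
    funext r
    rcases r with (⟨t, a⟩ | ⟨t, a⟩) | (⟨t, a⟩ | ⟨t, a⟩)
    · show u ((k : ℤ) - (Tini : ℤ) + ((t : ℕ) : ℤ)) a =
        ∑ j : Fin (T - N + 1),
          extState m p Tini ud yd (((j : ℕ) : ℤ) + 1) (Sum.inl (t, a)) * α j
      rw [hRu_past α t a, hu _ (by omega) (by have := t.isLt; omega)]
    · show y ((k : ℤ) - (Tini : ℤ) + ((t : ℕ) : ℤ)) a =
        ∑ j : Fin (T - N + 1),
          extState m p Tini ud yd (((j : ℕ) : ℤ) + 1) (Sum.inr (t, a)) * α j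
      rw [hRy_past α t a, hyeq _ (by omega) (by have := t.isLt; omega)]
    · show u ((k : ℤ) + ((t : ℕ) : ℤ)) a =
        ∑ j : Fin (T - N + 1), ud (((t : ℕ) : ℤ) + ((j : ℕ) : ℤ) + 1) a * α j
      rw [hRu_fut α t a, hu _ (by omega) (by have := t.isLt; omega)]
    · show y ((k : ℤ) + ((t : ℕ) : ℤ)) a =
        ∑ j : Fin (T - N + 1), yd (((t : ℕ) : ℤ) + ((j : ℕ) : ℤ) + 1) a * α j
      rw [hRy_fut α t a, hyeq _ (by omega) (by have := t.isLt; omega)]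
  · -- easy direction
    rintro ⟨α, hα⟩
    have hueq : ∀ i : ℤ, (k : ℤ) - Tini ≤ i → i ≤ (k : ℤ) + N - 1 →
        u i = (∑ j, α j • ud (i - k + (j : ℕ) + 1)) := by
      intro i h1 h2
      by_cases hik : i < k
      · have ht : ∃ t : Fin Tini, i = (k : ℤ) - Tini + (t : ℕ) := by
          refine ⟨⟨(i - ((k : ℤ) - Tini)).toNat, by omega⟩, ?_⟩
          show i = (k : ℤ) - (Tini : ℤ) + (((i - ((k : ℤ) - (Tini : ℤ))).toNat : ℕ) : ℤ)
          omega
        obtain ⟨t, rfl⟩ := ht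
        funext a
        exact (congrFun hα (Sum.inl (Sum.inl (t, a)))).trans (hRu_past α t a)
      · have ht : ∃ t : Fin N, i = (k : ℤ) + (t : ℕ) := by
          refine ⟨⟨(i - (k : ℤ)).toNat, by omega⟩, ?_⟩
          show i = (k : ℤ) + (((i - (k : ℤ)).toNat : ℕ) : ℤ)
          omega
        obtain ⟨t, rfl⟩ := ht
        funext a
        exact (congrFun hα (Sum.inr (Sum.inl (t, a)))).trans (hRu_fut α t a)
    have hyeq : ∀ i : ℤ, (k : ℤ) - Tini ≤ i → i ≤ (k : ℤ) + N - 1 →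
        y i = (∑ j, α j • yd (i - k + (j : ℕ) + 1)) := by
      intro i h1 h2
      by_cases hik : i < k
      · have ht : ∃ t : Fin Tini, i = (k : ℤ) - Tini + (t : ℕ) := by
          refine ⟨⟨(i - ((k : ℤ) - Tini)).toNat, by omega⟩, ?_⟩
          show i = (k : ℤ) - (Tini : ℤ) + (((i - ((k : ℤ) - (Tini : ℤ))).toNat : ℕ) : ℤ)
          omega
        obtain ⟨t, rfl⟩ := ht
        funext a
        exact (congrFun hα (Sum.inl (Sum.inr (t, a)))).trans (hRy_past α t a)
      · have ht : ∃ t : Fin N, i = (k : ℤ) + (t : ℕ) := by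
          refine ⟨⟨(i - (k : ℤ)).toNat, by omega⟩, ?_⟩
          show i = (k : ℤ) + (((i - (k : ℤ)).toNat : ℕ) : ℤ)
          omega
        obtain ⟨t, rfl⟩ := ht
        funext a
        exact (congrFun hα (Sum.inr (Sum.inr (t, a)))).trans (hRy_fut α t a)
    refine ⟨fun i' => ∑ j, α j • xd (i' - k + (j : ℕ) + 1), fun i h1 h2 => ?_⟩
    have hc := hcomb α i h1 h2
    constructor
    · show (∑ j, α j • xd ((i + 1) - k + (j : ℕ) + 1)) = _
      rw [hueq i h1 h2]
      exact hc.1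
    · rw [hueq i h1 h2, hyeq i h1 h2]
      exact hc.2
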